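/- Let p ≥ 1, let F be a probability measure on [0,∞)^p with ∫ ‖β‖² F(dβ) < ∞, let γ₁,…,γ_p ≥ 0, and let ρ₀ be a Lévy measure on (0,∞) with ρ̄₀(x) ∼ x^{-σ} ℓ(1/x) as x → 0⁺, where σ ∈ (0,1) and ℓ is slowly varying at infinity with lim_{t→∞} ℓ(t) > 0 allowed to be any positive limit behaviour of a slowly varying function. For ε > 0 let ρ_ε be the compound Lévy measure built from (F, ρ₀ restricted to (0,ε), γ), and set b_ε = ε^{1-σ/2} √(ℓ(1/ε)). Then for every κ > 0, (1/b_ε²) ∫_{{w ∈ [0,∞)^p : ‖w‖ > κ b_ε}} ‖w‖² ρ_ε(dw) → 0 as ε → 0⁺. -/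

import Mathlib

open MeasureTheory Filter Set Real Topology

/-- The compound Lévy measure on `[0,∞)^p` built from a score distribution `F` on `[0,∞)^p`,
a base Lévy measure `ρ₀` on `(0,∞)` and exponential tilting parameters `γ₁,…,γ_p ≥ 0`: the
pushforward of `e^{-w₀ Σ_k γ_k β_k} F(dβ) ρ₀(dw₀)` on `(0,∞) × [0,∞)^p` under the map
`(w₀, β) ↦ (w₀ β₁, …, w₀ β_p)`. -/
noncomputable def compoundLevy {p : ℕ} (F : Measure (Fin p → ℝ)) (ρ₀ : Measure ℝ)
    (γ : Fin p → ℝ) : Measure (Fin p → ℝ) :=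
  Measure.map (fun q : ℝ × (Fin p → ℝ) => fun k => q.1 * q.2 k)
    (((ρ₀.restrict (Set.Ioi 0)).prod F).withDensity
      fun q => ENNReal.ofReal (Real.exp (-q.1 * ∑ k, γ k * q.2 k)))

lemma dyadic_iter_up (ℓ : ℝ → ℝ) (T : ℝ) (hT : 1 ≤ T)
    (h : ∀ t, T ≤ t → ℓ (2 * t) ≤ 2 * ℓ t) :
    ∀ (n : ℕ) (t : ℝ), T ≤ t → ℓ (2 ^ n * t) ≤ 2 ^ n * ℓ t := by
  intro n
  induction n with
  | zero => intro t _; simp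
  | succ n ih =>
    intro t ht
    have ht0 : (1:ℝ) ≤ t := hT.trans ht
    have h2 : T ≤ 2 ^ n * t :=
      ht.trans (le_mul_of_one_le_left (by linarith) (one_le_pow₀ one_le_two))
    have e1 : (2:ℝ) ^ (n+1) * t = 2 * (2 ^ n * t) := by ring
    calc ℓ (2 ^ (n+1) * t) = ℓ (2 * (2 ^ n * t)) := by rw [e1]
      _ ≤ 2 * ℓ (2 ^ n * t) := h _ h2
      _ ≤ 2 * (2 ^ n * ℓ t) := by
          have := ih t ht; linarith
      _ = 2 ^ (n+1) * ℓ t := by ring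

lemma dyadic_iter_down (ℓ : ℝ → ℝ) (T c : ℝ) (hT : 1 ≤ T) (hc : 0 ≤ c)
    (h : ∀ t, T ≤ t → c * ℓ t ≤ ℓ (2 * t)) :
    ∀ (n : ℕ) (t : ℝ), T ≤ t → c ^ n * ℓ t ≤ ℓ (2 ^ n * t) := by
  intro n
  induction n with
  | zero => intro t _; simp
  | succ n ih =>
    intro t ht
    have ht0 : (1:ℝ) ≤ t := hT.trans ht
    have h2 : T ≤ 2 ^ n * t :=
      ht.trans (le_mul_of_one_le_left (by linarith) (one_le_pow₀ one_le_two))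
    have e1 : (2:ℝ) ^ (n+1) * t = 2 * (2 ^ n * t) := by ring
    calc c ^ (n+1) * ℓ t = c * (c ^ n * ℓ t) := by ring
      _ ≤ c * ℓ (2 ^ n * t) := by
          have := ih t ht
          exact mul_le_mul_of_nonneg_left this hc
      _ ≤ ℓ (2 * (2 ^ n * t)) := h _ h2
      _ = ℓ (2 ^ (n+1) * t) := by rw [e1]



lemma karamata_dyadic (ρ₀ : Measure ℝ) (σ : ℝ) (hσ0 : 0 < σ) (hσ1 : σ < 1)
    (ℓ : ℝ → ℝ) (x₁ T ε : ℝ)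
    (hρ : ∀ x, 0 < x → x < x₁ → ρ₀ (Set.Ioi x) ≤ ENNReal.ofReal (2 * (x ^ (-σ) * ℓ (1/x))))
    (hdou : ∀ (n : ℕ) (t : ℝ), T ≤ t → ℓ (2 ^ n * t) ≤ 2 ^ n * ℓ t)
    (hℓε : 0 ≤ ℓ (1/ε))
    (hε0 : 0 < ε) (hεx : ε < x₁) (hεT : T ≤ 1/ε) :
    ∫⁻ w in Set.Ioo 0 ε, ENNReal.ofReal (w^2) ∂ρ₀ ≤
      (ENNReal.ofReal ((2:ℝ) ^ (2+σ)) * (1 - ENNReal.ofReal ((2:ℝ) ^ (σ-1)))⁻¹)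
        * ENNReal.ofReal (ε ^ (2-σ) * ℓ (1/ε)) := by
  set ν := ρ₀.withDensity (fun w => ENNReal.ofReal (w^2)) with hνdef
  have hν : ∀ (s : Set ℝ), MeasurableSet s →
      ν s = ∫⁻ w in s, ENNReal.ofReal (w^2) ∂ρ₀ := fun s hs => withDensity_apply _ hs
  have hcover : Set.Ioo 0 ε ⊆ ⋃ n : ℕ, Set.Ioc (ε / 2 ^ (n+1)) (ε / 2 ^ n) := by
    intro w hw
    obtain ⟨hw0, hwε⟩ := hw
    have hP : ∃ k : ℕ, ε / w < 2 ^ (k+1) := by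
      obtain ⟨k, hk⟩ := pow_unbounded_of_one_lt (ε / w) (one_lt_two (α := ℝ))
      exact ⟨k, hk.trans_le (pow_le_pow_right₀ one_le_two (Nat.le_succ k))⟩
    have hn := Nat.find_spec hP
    set n := Nat.find hP with hndef
    have hlow : (2:ℝ) ^ n ≤ ε / w := by
      rcases Nat.eq_zero_or_pos n with h0 | hpos
      · rw [h0]; simpa using (one_le_div hw0).2 hwε.le
      · have hmin := Nat.find_min hP (Nat.pred_lt hpos.ne')
        push_neg at hmin
        have heq : (Nat.find hP).pred + 1 = n := Nat.succ_pred_eq_of_pos hpos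
        rwa [heq] at hmin
    refine Set.mem_iUnion.2 ⟨n, ?_, ?_⟩
    · rw [div_lt_iff₀ (by positivity)]
      rw [div_lt_iff₀ hw0] at hn
      linarith [hn]
    · rw [le_div_iff₀ (by positivity)]
      rw [le_div_iff₀ hw0] at hlow
      linarith [hlow]
  have hmain : ν (Set.Ioo 0 ε) ≤ ∑' n : ℕ, ν (Set.Ioc (ε / 2 ^ (n+1)) (ε / 2 ^ n)) :=
    (measure_mono hcover).trans (measure_iUnion_le _)
  -- per-term bound
  have hterm : ∀ n : ℕ, ν (Set.Ioc (ε / 2 ^ (n+1)) (ε / 2 ^ n)) ≤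
      ENNReal.ofReal (ε ^ (2-σ) * ℓ (1/ε) * ((2:ℝ) ^ (2+σ) * ((2:ℝ) ^ (σ-1)) ^ n)) := by
    intro n
    set a := ε / 2 ^ (n+1) with hadef
    set b := ε / 2 ^ n with hbdef
    have ha0 : 0 < a := by positivity
    have hb0 : 0 < b := by positivity
    have hax : a < x₁ := by
      have : a ≤ ε := by
        rw [hadef, div_le_iff₀ (by positivity)]
        nlinarith [one_le_pow₀ (one_le_two (α := ℝ)) (n := n+1), hε0]
      linarith
    have h1a : 1 / a = 2 ^ (n+1) * (1/ε) := by
      rw [hadef]; field_simp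
    have hℓa : ℓ (1/a) ≤ 2 ^ (n+1) * ℓ (1/ε) := by
      rw [h1a]; exact hdou (n+1) (1/ε) hεT
    have hreal : b^2 * (2 * (a ^ (-σ) * ℓ (1/a))) ≤
        ε ^ (2-σ) * ℓ (1/ε) * ((2:ℝ) ^ (2+σ) * ((2:ℝ) ^ (σ-1)) ^ n) := by
      have hineq : b^2 * (2 * (a ^ (-σ) * ℓ (1/a))) ≤
          b^2 * (2 * (a ^ (-σ) * (2 ^ (n+1) * ℓ (1/ε)))) := by
        have haσ : (0:ℝ) ≤ a ^ (-σ) := (Real.rpow_pos_of_pos ha0 _).le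
        gcongr
      refine hineq.trans (le_of_eq ?_)
      -- rewrite everything in terms of c := 2^σ
      have hc0 : (0:ℝ) < (2:ℝ) ^ σ := Real.rpow_pos_of_pos two_pos _
      have hεσ : (0:ℝ) < ε ^ σ := Real.rpow_pos_of_pos hε0 _
      have h1 : a ^ (-σ) = ((2:ℝ) ^ σ) ^ (n+1) / ε ^ σ := by
        rw [hadef, Real.rpow_neg (by positivity), Real.div_rpow hε0.le (by positivity),
          inv_div]
        congr 1
        rw [← Real.rpow_natCast (2:ℝ) (n+1), ← Real.rpow_natCast ((2:ℝ)^σ) (n+1),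
          ← Real.rpow_mul (by norm_num), ← Real.rpow_mul (by norm_num), mul_comm]
      have h2 : ε ^ (2-σ) = ε^2 / ε ^ σ := by
        rw [Real.rpow_sub hε0, Real.rpow_two]
      have h3 : (2:ℝ) ^ (2+σ) = 4 * (2:ℝ) ^ σ := by
        rw [Real.rpow_add two_pos, Real.rpow_two]; norm_num
      have h4 : (2:ℝ) ^ (σ-1) = (2:ℝ) ^ σ / 2 := by
        rw [Real.rpow_sub two_pos, Real.rpow_one]
      rw [h1, h2, h3, h4, hbdef]
      have h2n : (0:ℝ) < (2:ℝ)^n := by positivity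
      field_simp
      have e : ((1:ℝ)/2)^n * 2^(n*2) = 2^n := by
        rw [pow_mul, div_pow, one_pow, sq, ← mul_assoc, one_div_mul_cancel (by positivity), one_mul]
      simp only [one_div] at e ⊢
      linear_combination (-((2:ℝ)^σ * ((2:ℝ)^σ)^n * ℓ ε⁻¹ * 4)) * e
    calc ν (Set.Ioc a b) = ∫⁻ w in Set.Ioc a b, ENNReal.ofReal (w^2) ∂ρ₀ :=
          hν _ measurableSet_Ioc
      _ ≤ ∫⁻ _ in Set.Ioc a b, ENNReal.ofReal (b^2) ∂ρ₀ := by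
          refine setLIntegral_mono measurable_const (fun x hx => ?_)
          exact ENNReal.ofReal_le_ofReal (by nlinarith [hx.1, hx.2, ha0])
      _ = ENNReal.ofReal (b^2) * ρ₀ (Set.Ioc a b) := setLIntegral_const _ _
      _ ≤ ENNReal.ofReal (b^2) * ρ₀ (Set.Ioi a) :=
          mul_le_mul_right (measure_mono Set.Ioc_subset_Ioi_self) _
      _ ≤ ENNReal.ofReal (b^2) * ENNReal.ofReal (2 * (a ^ (-σ) * ℓ (1/a))) :=
          mul_le_mul_right (hρ a ha0 hax) _
      _ = ENNReal.ofReal (b^2 * (2 * (a ^ (-σ) * ℓ (1/a)))) :=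
          (ENNReal.ofReal_mul (by positivity)).symm
      _ ≤ _ := ENNReal.ofReal_le_ofReal hreal
  -- sum up
  have hr0 : (0:ℝ) ≤ (2:ℝ) ^ (σ-1) := (Real.rpow_pos_of_pos two_pos _).le
  have hsum : ∑' n : ℕ, ν (Set.Ioc (ε / 2 ^ (n+1)) (ε / 2 ^ n)) ≤
      (ENNReal.ofReal ((2:ℝ) ^ (2+σ)) * (1 - ENNReal.ofReal ((2:ℝ) ^ (σ-1)))⁻¹)
        * ENNReal.ofReal (ε ^ (2-σ) * ℓ (1/ε)) := by
    calc ∑' n : ℕ, ν (Set.Ioc (ε / 2 ^ (n+1)) (ε / 2 ^ n))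
        ≤ ∑' n : ℕ, ENNReal.ofReal (ε ^ (2-σ) * ℓ (1/ε) *
            ((2:ℝ) ^ (2+σ) * ((2:ℝ) ^ (σ-1)) ^ n)) := ENNReal.tsum_le_tsum hterm
      _ = ∑' n : ℕ, ENNReal.ofReal (ε ^ (2-σ) * ℓ (1/ε)) *
            (ENNReal.ofReal ((2:ℝ) ^ (2+σ)) * (ENNReal.ofReal ((2:ℝ) ^ (σ-1))) ^ n) := by
          refine tsum_congr fun n => ?_
          rw [← ENNReal.ofReal_pow hr0, ← ENNReal.ofReal_mul (p := (2:ℝ)^(2+σ)) (by positivity),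
            ← ENNReal.ofReal_mul (mul_nonneg (Real.rpow_pos_of_pos hε0 _).le hℓε)]
      _ = ENNReal.ofReal (ε ^ (2-σ) * ℓ (1/ε)) *
            (ENNReal.ofReal ((2:ℝ) ^ (2+σ)) * ∑' n : ℕ, (ENNReal.ofReal ((2:ℝ) ^ (σ-1))) ^ n) := by
          rw [ENNReal.tsum_mul_left, ENNReal.tsum_mul_left]
      _ = _ := by rw [ENNReal.tsum_geometric]; ring
  rw [← hν _ measurableSet_Ioo]
  exact hmain.trans hsum

set_option maxHeartbeats 2000000 in
/-- Let `F` be a probability measure on `[0,∞)^p` with finite second moment,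
`γ_k ≥ 0`, and `ρ₀` a Lévy measure on `(0,∞)` with regularly varying tail
`ρ̄₀(x) ∼ x^(-σ) ℓ(1/x)` as `x → 0⁺`, `σ ∈ (0,1)`, `ℓ` slowly varying at infinity. For
`ε > 0` let `ρ_ε` be the compound Lévy measure built from `(F, ρ₀|_{(0,ε)}, γ)` and set
`b_ε = ε^{1-σ/2} √(ℓ(1/ε))`. Then for every `κ > 0`,
`(1/b_ε²) ∫_{‖w‖ > κ b_ε} ‖w‖² ρ_ε(dw) → 0` as `ε → 0⁺` (Euclidean norm). -/
theorem small_jumps_lindeberg (p : ℕ) (hp : 1 ≤ p)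
    (F : Measure (Fin p → ℝ)) [IsProbabilityMeasure F]
    (hFsupp : F {β | ∃ m, β m < 0} = 0)
    (hFmom : Integrable (fun β => ∑ m, (β m) ^ 2) F)
    (γ : Fin p → ℝ) (hγ : ∀ m, 0 ≤ γ m)
    (ρ₀ : Measure ℝ) (hρ₀supp : ρ₀ (Set.Iic 0) = 0)
    (hρ₀levy : ∫⁻ w in Set.Ioi (0 : ℝ), ENNReal.ofReal (min 1 w) ∂ρ₀ < ⊤)
    (σ : ℝ) (hσ : σ ∈ Set.Ioo (0 : ℝ) 1) (ℓ : ℝ → ℝ)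
    (hℓpos : ∀ t > (0 : ℝ), 0 < ℓ t)
    (hℓslow : ∀ a > (0 : ℝ), Tendsto (fun t => ℓ (a * t) / ℓ t) atTop (𝓝 1))
    (htail : Tendsto (fun x => (ρ₀ (Set.Ioi x)).toReal / (x ^ (-σ) * ℓ (1 / x)))
      (𝓝[>] (0 : ℝ)) (𝓝 1))
    (κ : ℝ) (hκ : 0 < κ) :
    Tendsto (fun ε =>
        (∫⁻ w in {w : Fin p → ℝ |
            Real.sqrt (∑ m, (w m) ^ 2) > κ * (ε ^ (1 - σ / 2) * Real.sqrt (ℓ (1 / ε)))},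
          ENNReal.ofReal (∑ m, (w m) ^ 2)
          ∂(compoundLevy F (ρ₀.restrict (Set.Ioo 0 ε)) γ)) /
        ENNReal.ofReal ((ε ^ (1 - σ / 2) * Real.sqrt (ℓ (1 / ε))) ^ 2))
      (𝓝[>] (0 : ℝ)) (𝓝 0) := by
  obtain ⟨hσ0, hσ1⟩ := hσ
  -- Step A: two-sided tail bounds near 0
  have htail2 : ∀ᶠ x in 𝓝[>] (0:ℝ),
      (ρ₀ (Set.Ioi x)).toReal / (x ^ (-σ) * ℓ (1/x)) ∈ Set.Ioo (1/2 : ℝ) 2 :=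
    htail.eventually (Ioo_mem_nhds (by norm_num) (by norm_num))
  obtain ⟨x₁, hx₁mem, hx₁⟩ := mem_nhdsGT_iff_exists_Ioo_subset.1 htail2
  have hx₁0 : (0:ℝ) < x₁ := hx₁mem
  have hφpos : ∀ x : ℝ, 0 < x → 0 < x ^ (-σ) * ℓ (1/x) := fun x hx =>
    mul_pos (Real.rpow_pos_of_pos hx _) (hℓpos _ (by positivity))
  have hratio : ∀ x, 0 < x → x < x₁ →
      (1/2 : ℝ) < (ρ₀ (Set.Ioi x)).toReal / (x ^ (-σ) * ℓ (1/x)) ∧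
      (ρ₀ (Set.Ioi x)).toReal / (x ^ (-σ) * ℓ (1/x)) < 2 := fun x h1 h2 => hx₁ ⟨h1, h2⟩
  have hfin : ∀ x, 0 < x → x < x₁ → ρ₀ (Set.Ioi x) ≠ ⊤ := by
    intro x h1 h2
    by_contra htop
    have h := (hratio x h1 h2).1
    rw [htop] at h
    simp only [ENNReal.toReal_top, zero_div] at h
    norm_num at h
  have hup : ∀ x, 0 < x → x < x₁ →
      ρ₀ (Set.Ioi x) ≤ ENNReal.ofReal (2 * (x ^ (-σ) * ℓ (1/x))) := by
    intro x h1 h2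
    have h := (hratio x h1 h2).2
    rw [div_lt_iff₀ (hφpos x h1)] at h
    calc ρ₀ (Set.Ioi x) = ENNReal.ofReal (ρ₀ (Set.Ioi x)).toReal :=
          (ENNReal.ofReal_toReal (hfin x h1 h2)).symm
      _ ≤ ENNReal.ofReal (2 * (x ^ (-σ) * ℓ (1/x))) :=
          ENNReal.ofReal_le_ofReal (by linarith)
  have hlo : ∀ x, 0 < x → x < x₁ →
      x ^ (-σ) * ℓ (1/x) < 2 * (ρ₀ (Set.Ioi x)).toReal := by
    intro x h1 h2
    have h := (hratio x h1 h2).1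
    rw [lt_div_iff₀ (hφpos x h1)] at h
    linarith
  -- Step B: doubling bounds for ℓ
  have hq1 : (1:ℝ) < 2 ^ (σ/2 : ℝ) :=
    (Real.one_lt_rpow_iff_of_pos two_pos).2 (Or.inl ⟨one_lt_two, by positivity⟩)
  have hc1 : (2:ℝ) ^ (-(σ/2) : ℝ) < 1 :=
    Real.rpow_lt_one_of_one_lt_of_neg one_lt_two (by linarith)
  have hc0 : (0:ℝ) < 2 ^ (-(σ/2) : ℝ) := Real.rpow_pos_of_pos two_pos _
  obtain ⟨T₀, hT₀⟩ := eventually_atTop.1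
    ((hℓslow 2 two_pos).eventually (Ioo_mem_nhds hc1 one_lt_two))
  set T := max T₀ 1 with hTdef
  have hT1 : (1:ℝ) ≤ T := le_max_right _ _
  have hTprop : ∀ t, T ≤ t →
      ((2:ℝ) ^ (-(σ/2) : ℝ) * ℓ t ≤ ℓ (2*t) ∧ ℓ (2*t) ≤ 2 * ℓ t) := by
    intro t ht
    have h1 := hT₀ t (le_trans (le_max_left _ _) ht)
    have hℓt : 0 < ℓ t := hℓpos t (by linarith [hT1.trans ht])
    obtain ⟨ha, hb⟩ := h1
    constructor
    · rw [lt_div_iff₀ hℓt] at ha; linarith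
    · rw [div_lt_iff₀ hℓt] at hb; linarith
  have hdou := dyadic_iter_up ℓ T hT1 (fun t ht => (hTprop t ht).2)
  have hdoulow := dyadic_iter_down ℓ T _ hT1 hc0.le (fun t ht => (hTprop t ht).1)
  -- Step C: x^(-σ) ℓ(1/x) → ∞ as x → 0+
  have hφtop : Tendsto (fun x : ℝ => x ^ (-σ) * ℓ (1/x)) (𝓝[>] (0:ℝ)) atTop := by
    rw [tendsto_atTop]
    intro M
    set x₂ := min (x₁/2) (1/T) with hx₂def
    have hT0 : (0:ℝ) < T := by linarith
    have hx₂0 : 0 < x₂ := lt_min (by linarith) (by positivity)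
    have hx₂x₁ : x₂ < x₁ := lt_of_le_of_lt (min_le_left _ _) (by linarith)
    have hx₂T : T ≤ 1/x₂ := by
      have h := min_le_right (x₁/2) (1/T)
      rw [le_div_iff₀ hx₂0]
      rw [← hx₂def] at h
      rw [le_div_iff₀ hT0] at h
      linarith
    have hφx₂ : 0 < x₂ ^ (-σ) * ℓ (1/x₂) := hφpos _ hx₂0
    -- dyadic growth
    have hgrow : ∀ n : ℕ, ((2:ℝ) ^ (σ/2 : ℝ)) ^ n * (x₂ ^ (-σ) * ℓ (1/x₂)) ≤
        (x₂ / 2^n) ^ (-σ) * ℓ (1/(x₂ / 2^n)) := by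
      intro n
      have h1x : 1/(x₂/2^n) = 2^n * (1/x₂) := by field_simp
      have hl := hdoulow n (1/x₂) hx₂T
      have hpow : (x₂/2^n) ^ (-σ) = ((2:ℝ) ^ (σ:ℝ)) ^ n * x₂ ^ (-σ) := by
        rw [Real.rpow_neg (by positivity), Real.div_rpow hx₂0.le (by positivity), inv_div,
          div_eq_mul_inv, ← Real.rpow_neg hx₂0.le]
        congr 1
        rw [← Real.rpow_natCast (2:ℝ) n, ← Real.rpow_natCast ((2:ℝ) ^ (σ:ℝ)) n,
          ← Real.rpow_mul (by norm_num), ← Real.rpow_mul (by norm_num), mul_comm]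
      rw [h1x, hpow]
      have hσσ : ((2:ℝ) ^ (σ/2 : ℝ)) ^ n = ((2:ℝ) ^ (σ:ℝ)) ^ n * ((2:ℝ) ^ (-(σ/2) : ℝ)) ^ n := by
        rw [← mul_pow]
        congr 1
        rw [← Real.rpow_add two_pos]
        congr 1
        ring
      rw [hσσ]
      have h2σ : (0:ℝ) < ((2:ℝ) ^ (σ:ℝ)) ^ n := by positivity
      have hx₂σ : (0:ℝ) < x₂ ^ (-σ) := Real.rpow_pos_of_pos hx₂0 _
      calc ((2:ℝ) ^ (σ:ℝ)) ^ n * ((2:ℝ) ^ (-(σ/2):ℝ)) ^ n * (x₂ ^ (-σ) * ℓ (1/x₂))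
          = (((2:ℝ) ^ (σ:ℝ)) ^ n * x₂ ^ (-σ)) * (((2:ℝ) ^ (-(σ/2):ℝ)) ^ n * ℓ (1/x₂)) := by
            ring
        _ ≤ (((2:ℝ) ^ (σ:ℝ)) ^ n * x₂ ^ (-σ)) * ℓ (2^n * (1/x₂)) := by
            exact mul_le_mul_of_nonneg_left hl (by positivity)
    obtain ⟨n, hn⟩ := ((tendsto_pow_atTop_atTop_of_one_lt hq1).eventually_ge_atTop
      ((4*M)/(x₂ ^ (-σ) * ℓ (1/x₂)))).exists
    have hxn0 : 0 < x₂ / 2^n := by positivity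
    have hxnx₁ : x₂ / 2^n < x₁ :=
      lt_of_le_of_lt (div_le_self hx₂0.le (one_le_pow₀ one_le_two)) hx₂x₁
    have h4M : 4*M ≤ ((2:ℝ) ^ (σ/2 : ℝ)) ^ n * (x₂ ^ (-σ) * ℓ (1/x₂)) := by
      rw [div_le_iff₀ hφx₂] at hn
      linarith
    filter_upwards [Ioo_mem_nhdsGT_of_mem
      (show (0:ℝ) ∈ Set.Ico (0:ℝ) (x₂/2^n) from ⟨le_refl 0, hxn0⟩)] with x hx
    obtain ⟨hx0, hxlt⟩ := hx
    have hxx₁ : x < x₁ := hxlt.trans hxnx₁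
    have h2 := hlo (x₂/2^n) hxn0 hxnx₁
    have h3 : (ρ₀ (Set.Ioi (x₂/2^n))).toReal ≤ (ρ₀ (Set.Ioi x)).toReal :=
      ENNReal.toReal_mono (hfin x hx0 hxx₁) (measure_mono (Set.Ioi_subset_Ioi hxlt.le))
    have h4 : (ρ₀ (Set.Ioi x)).toReal < 2 * (x ^ (-σ) * ℓ (1/x)) := by
      have h := (hratio x hx0 hxx₁).2
      rw [div_lt_iff₀ (hφpos x hx0)] at h
      linarith
    have h5 := hgrow n
    linarith
  -- Step D: second-moment tail of F
  have hmβ : Measurable (fun β : Fin p → ℝ => ∑ m, β m ^ 2) :=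
    Finset.measurable_sum _ (fun m _ => (measurable_pi_apply m).pow_const 2)
  set μ' := F.withDensity (fun β => ENNReal.ofReal (∑ m, β m ^ 2)) with hμ'def
  have hμ'fin : μ' Set.univ ≠ ⊤ := by
    rw [hμ'def, withDensity_apply _ MeasurableSet.univ, Measure.restrict_univ]
    refine (lt_of_le_of_lt (lintegral_mono fun β => ?_) hFmom.hasFiniteIntegral).ne
    exact Real.ofReal_le_enorm _
  have hψ : Tendsto (fun M : ℝ => μ' {β | M < ∑ m, β m ^ 2}) atTop (𝓝 0) := by
    have hsets : ∀ M : ℝ, MeasurableSet {β : Fin p → ℝ | M < ∑ m, β m ^ 2} :=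
      fun M => measurableSet_lt measurable_const hmβ
    have hanti : Antitone (fun M : ℝ => {β : Fin p → ℝ | M < ∑ m, β m ^ 2}) :=
      fun M N h β hβ => lt_of_le_of_lt h hβ
    have hInter : ⋂ M : ℝ, {β : Fin p → ℝ | M < ∑ m, β m ^ 2} = ∅ := by
      ext β
      simp only [Set.mem_iInter, Set.mem_setOf_eq, Set.mem_empty_iff_false, iff_false]
      push_neg
      exact ⟨∑ m, β m ^ 2, le_refl _⟩
    have h := tendsto_measure_iInter_atTop (μ := μ')
      (fun M => (hsets M).nullMeasurableSet) hanti
      ⟨0, ne_top_of_le_ne_top hμ'fin (measure_mono (Set.subset_univ _))⟩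
    rw [hInter] at h
    simpa [Function.comp_def] using h
  have hr2top : Tendsto (fun ε : ℝ => κ^2 * (ε ^ (-σ) * ℓ (1/ε))) (𝓝[>] (0:ℝ)) atTop :=
    Tendsto.const_mul_atTop (by positivity) hφtop
  have hψcomp : Tendsto (fun ε : ℝ => μ' {β | κ^2 * (ε ^ (-σ) * ℓ (1/ε)) < ∑ m, β m ^ 2})
      (𝓝[>] (0:ℝ)) (𝓝 0) := hψ.comp hr2top
  -- constant
  set C := ENNReal.ofReal ((2:ℝ) ^ (2+σ : ℝ)) * (1 - ENNReal.ofReal ((2:ℝ) ^ (σ-1 : ℝ)))⁻¹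
    with hCdef
  have hCne : C ≠ ⊤ := by
    refine ENNReal.mul_ne_top ENNReal.ofReal_ne_top ?_
    rw [ENNReal.inv_ne_top]
    have hrlt : ENNReal.ofReal ((2:ℝ) ^ (σ-1 : ℝ)) < 1 :=
      ENNReal.ofReal_lt_one.2 (Real.rpow_lt_one_of_one_lt_of_neg one_lt_two (by linarith))
    exact (tsub_pos_of_lt hrlt).ne'
  -- Step F: main eventual bound
  have hmain : ∀ᶠ ε in 𝓝[>] (0:ℝ),
      (∫⁻ w in {w : Fin p → ℝ |
          Real.sqrt (∑ m, (w m) ^ 2) > κ * (ε ^ (1 - σ / 2) * Real.sqrt (ℓ (1 / ε)))},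
        ENNReal.ofReal (∑ m, (w m) ^ 2)
        ∂(compoundLevy F (ρ₀.restrict (Set.Ioo 0 ε)) γ)) /
      ENNReal.ofReal ((ε ^ (1 - σ / 2) * Real.sqrt (ℓ (1 / ε))) ^ 2) ≤
      C * μ' {β | κ^2 * (ε ^ (-σ) * ℓ (1/ε)) < ∑ m, β m ^ 2} := by
    have hT0 : (0:ℝ) < T := by linarith
    filter_upwards [Ioo_mem_nhdsGT_of_mem
      (show (0:ℝ) ∈ Set.Ico (0:ℝ) (min x₁ (1/T)) from
        ⟨le_refl 0, lt_min hx₁0 (by positivity)⟩)] with ε hε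
    obtain ⟨hε0, hεlt⟩ := hε
    have hεx₁ : ε < x₁ := hεlt.trans_le (min_le_left _ _)
    have hεT : T ≤ 1/ε := by
      have h2 : ε < 1/T := hεlt.trans_le (min_le_right _ _)
      rw [lt_div_iff₀ hT0] at h2
      rw [le_div_iff₀ hε0]
      linarith
    have hℓε0 : 0 < ℓ (1/ε) := hℓpos _ (by positivity)
    set b := ε ^ (1 - σ/2) * Real.sqrt (ℓ (1/ε)) with hbdef
    have hb0 : 0 < b := by
      rw [hbdef]
      exact mul_pos (Real.rpow_pos_of_pos hε0 _) (Real.sqrt_pos.2 hℓε0)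
    have hbsq : b^2 = ε ^ (2-σ : ℝ) * ℓ (1/ε) := by
      rw [hbdef, mul_pow, Real.sq_sqrt hℓε0.le]
      congr 1
      rw [← Real.rpow_natCast (ε ^ (1 - σ/2 : ℝ)) 2, ← Real.rpow_mul hε0.le]
      congr 1
      push_cast; ring
    have hthr : (κ * b)^2 / ε^2 = κ^2 * (ε ^ (-σ) * ℓ (1/ε)) := by
      have hε2 : ε ^ (2-σ : ℝ) = ε ^ (-σ : ℝ) * ε^2 := by
        rw [← Real.rpow_natCast ε 2, ← Real.rpow_add hε0]
        congr 1; push_cast; ring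
      rw [mul_pow, hbsq, hε2]
      field_simp
    have hTmeas : Measurable (fun q : ℝ × (Fin p → ℝ) => fun k => q.1 * q.2 k) :=
      measurable_pi_lambda _
        (fun k => measurable_fst.mul ((measurable_pi_apply k).comp measurable_snd))
    have hSmeas : MeasurableSet {w : Fin p → ℝ | Real.sqrt (∑ m, w m ^ 2) > κ * b} :=
      measurableSet_lt measurable_const (Real.continuous_sqrt.measurable.comp hmβ)
    have hgmeas : Measurable (fun q : ℝ × (Fin p → ℝ) =>
        ENNReal.ofReal (Real.exp (-q.1 * ∑ k, γ k * q.2 k))) := by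
      refine ENNReal.measurable_ofReal.comp (Real.continuous_exp.measurable.comp ?_)
      exact measurable_fst.neg.mul
        (Finset.measurable_sum _ fun k _ =>
          measurable_const.mul ((measurable_pi_apply k).comp measurable_snd))
    have hfmeas : Measurable (fun w : Fin p → ℝ => ENNReal.ofReal (∑ m, w m ^ 2)) :=
      ENNReal.measurable_ofReal.comp hmβ
    have htmeas : MeasurableSet {β : Fin p → ℝ | κ^2 * (ε ^ (-σ) * ℓ (1/ε)) < ∑ m, β m ^ 2} :=
      measurableSet_lt measurable_const hmβ
    have hrr : ((ρ₀.restrict (Set.Ioo 0 ε)).restrict (Set.Ioi 0)) = ρ₀.restrict (Set.Ioo 0 ε) := by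
      rw [Measure.restrict_restrict measurableSet_Ioi,
        Set.inter_eq_right.2 Set.Ioo_subset_Ioi_self]
    apply ENNReal.div_le_of_le_mul
    simp only [compoundLevy]
    rw [hrr, ← lintegral_indicator hSmeas,
      lintegral_map (hfmeas.indicator hSmeas) hTmeas,
      lintegral_withDensity_eq_lintegral_mul _ hgmeas
        (show Measurable fun a : ℝ × (Fin p → ℝ) =>
            ({w : Fin p → ℝ | Real.sqrt (∑ m, w m ^ 2) > κ * b}.indicator
              (fun w => ENNReal.ofReal (∑ m, w m ^ 2))) (fun k => a.1 * a.2 k) from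
          (hfmeas.indicator hSmeas).comp hTmeas)]
    refine le_trans (lintegral_mono_ae (g := fun q : ℝ × (Fin p → ℝ) =>
      ENNReal.ofReal (q.1^2) *
        Set.indicator {β : Fin p → ℝ | κ^2 * (ε ^ (-σ) * ℓ (1/ε)) < ∑ m, β m ^ 2}
          (fun β => ENNReal.ofReal (∑ m, β m ^ 2)) q.2) ?_) ?_
    · -- a.e. pointwise bound
      have hnull : ((ρ₀.restrict (Set.Ioo 0 ε)).prod F)
          {q : ℝ × (Fin p → ℝ) | ¬(q.1 ∈ Set.Ioo 0 ε ∧ ∀ m, 0 ≤ q.2 m)} = 0 := by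
        refine measure_mono_null (t := ((Set.Ioo 0 ε)ᶜ ×ˢ Set.univ) ∪
          (Set.univ ×ˢ {β : Fin p → ℝ | ∃ m, β m < 0})) ?_ ?_
        · intro q hq
          simp only [Set.mem_setOf_eq, not_and_or, not_forall, not_le] at hq
          rcases hq with h | h
          · exact Or.inl ⟨h, Set.mem_univ _⟩
          · exact Or.inr ⟨Set.mem_univ _, h⟩
        · refine measure_union_null ?_ ?_
          · rw [Measure.prod_prod, Measure.restrict_apply measurableSet_Ioo.compl,
              Set.compl_inter_self, measure_empty, zero_mul]
          · rw [Measure.prod_prod, hFsupp, mul_zero]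
      have hae : ∀ᵐ q ∂((ρ₀.restrict (Set.Ioo 0 ε)).prod F),
          q.1 ∈ Set.Ioo 0 ε ∧ ∀ m, 0 ≤ q.2 m := by
        rw [ae_iff]
        exact hnull
      filter_upwards [hae] with q hq
      obtain ⟨⟨hq1, hq2⟩, hq3⟩ := hq
      simp only [Pi.mul_apply]
      by_cases hTq : (fun k => q.1 * q.2 k) ∈
          {w : Fin p → ℝ | Real.sqrt (∑ m, w m ^ 2) > κ * b}
      · rw [Set.indicator_of_mem hTq]
        have hSβ : 0 ≤ ∑ m, q.2 m ^ 2 := Finset.sum_nonneg fun m _ => sq_nonneg _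
        have hX : ∑ m, ((fun k => q.1 * q.2 k) m) ^ 2 = q.1^2 * ∑ m, q.2 m ^ 2 := by
          rw [Finset.mul_sum]
          exact Finset.sum_congr rfl fun m _ => by ring
        have hmemS : κ * b < Real.sqrt (∑ m, ((fun k => q.1 * q.2 k) m) ^ 2) := hTq
        have hsq : (κ * b)^2 < ∑ m, ((fun k => q.1 * q.2 k) m) ^ 2 :=
          (Real.lt_sqrt (by positivity)).1 hmemS
        have hthr2 : κ^2 * (ε ^ (-σ) * ℓ (1/ε)) < ∑ m, q.2 m ^ 2 := by
          rw [hX] at hsq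
          have hq12 : q.1^2 ≤ ε^2 := by nlinarith [hq1, hq2]
          have h5 : (κ * b)^2 < ε^2 * ∑ m, q.2 m ^ 2 := by nlinarith
          rw [← hthr, div_lt_iff₀ (by positivity : (0:ℝ) < ε^2)]
          linarith
        rw [Set.indicator_of_mem
          (show q.2 ∈ {β : Fin p → ℝ | κ^2 * (ε ^ (-σ) * ℓ (1/ε)) < ∑ m, β m ^ 2} from hthr2)]
        have hg1 : ENNReal.ofReal (Real.exp (-q.1 * ∑ k, γ k * q.2 k)) ≤ 1 := by
          rw [← ENNReal.ofReal_one]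
          refine ENNReal.ofReal_le_ofReal ?_
          rw [Real.exp_le_one_iff]
          have hsum : 0 ≤ ∑ k, γ k * q.2 k :=
            Finset.sum_nonneg fun k _ => mul_nonneg (hγ k) (hq3 k)
          nlinarith [hq1]
        calc ENNReal.ofReal (Real.exp (-q.1 * ∑ k, γ k * q.2 k)) *
              ENNReal.ofReal (∑ m, ((fun k => q.1 * q.2 k) m) ^ 2)
            ≤ 1 * ENNReal.ofReal (∑ m, ((fun k => q.1 * q.2 k) m) ^ 2) :=
              mul_le_mul_left hg1 _
          _ = ENNReal.ofReal (q.1^2 * ∑ m, q.2 m ^ 2) := by rw [one_mul, hX]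
          _ = ENNReal.ofReal (q.1^2) * ENNReal.ofReal (∑ m, q.2 m ^ 2) :=
              ENNReal.ofReal_mul (sq_nonneg _)
      · rw [Set.indicator_of_notMem hTq, mul_zero]
        exact zero_le
    · -- product integral factorizes
      rw [lintegral_prod_mul
        ((show Measurable fun w₀ : ℝ => ENNReal.ofReal (w₀ ^ 2) from
          ENNReal.measurable_ofReal.comp (measurable_id.pow_const 2)).aemeasurable)
        (hfmeas.indicator htmeas).aemeasurable]
      rw [lintegral_indicator htmeas, ← withDensity_apply _ htmeas]
      have hG : ∫⁻ w in Set.Ioo 0 ε, ENNReal.ofReal (w ^ 2) ∂ρ₀ ≤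
          C * ENNReal.ofReal (b^2) := by
        rw [hbsq, hCdef]
        exact karamata_dyadic ρ₀ σ hσ0 hσ1 ℓ x₁ T ε hup hdou hℓε0.le hε0 hεx₁ hεT
      refine le_trans (mul_le_mul_left hG _) (le_of_eq ?_)
      rw [← hμ'def]
      ring
  have hlim : Tendsto (fun ε : ℝ => C * μ' {β | κ^2 * (ε ^ (-σ) * ℓ (1/ε)) < ∑ m, β m ^ 2})
      (𝓝[>] (0:ℝ)) (𝓝 0) := by
    have h := ENNReal.Tendsto.const_mul hψcomp (Or.inr hCne)
    rwa [mul_zero] at h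
  exact tendsto_of_tendsto_of_tendsto_of_le_of_le' tendsto_const_nhds hlim
    (Eventually.of_forall fun ε => zero_le) hmain
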